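/- Let N be an odd positive integer, k a positive integer, and m a divisor of N such that m^2 divides N*k. Then the number of divisors d of N satisfying gcd(d, N*k/d) = m is exactly 2^(p_m). -/

import Mathlib

/-- `p_m`: the number of odd primes dividing `N*m'/m^2` but not `k/m'`, where `m' = gcd(m,k)`. -/
def pm (N k m : ℕ) : ℕ :=
  ((N * Nat.gcd m k / m ^ 2).primeFactors.filter
    (fun p => p ≠ 2 ∧ ¬ p ∣ k / Nat.gcd m k)).card

theorem card_divisors_with_gcd_eq_odd_case (N k m : ℕ) (hN : 0 < N) (hNodd : Odd N)
    (hk : 0 < k) (hm : m ∣ N) (hm2 : m ^ 2 ∣ N * k) :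
    (N.divisors.filter (fun d => Nat.gcd d (N * k / d) = m)).card = 2 ^ pm N k m := by
  have hN0 : N ≠ 0 := hN.ne'
  have hk0 : k ≠ 0 := hk.ne'
  have hm0 : m ≠ 0 := (Nat.pos_of_dvd_of_pos hm hN).ne'
  -- basic pointwise facts
  have hca : ∀ p, m.factorization p ≤ N.factorization p := fun p =>
    (Nat.factorization_le_iff_dvd hm0 hN0).mpr hm p
  have hcab : ∀ p, 2 * m.factorization p ≤ N.factorization p + k.factorization p := by
    intro p
    have h := (Nat.factorization_le_iff_dvd (pow_ne_zero 2 hm0)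
      (mul_ne_zero hN0 hk0)).mpr hm2 p
    rw [Nat.factorization_pow, Nat.factorization_mul hN0 hk0] at h
    simpa using h
  have ha2 : N.factorization 2 = 0 := by
    apply Nat.factorization_eq_zero_of_not_dvd
    intro h2
    rcases hNodd with ⟨t, ht⟩
    omega
  set m' : ℕ := Nat.gcd m k with hm'
  have hm'0 : m' ≠ 0 := Nat.gcd_ne_zero_left hm0
  have hm'fact : ∀ p, m'.factorization p = min (m.factorization p) (k.factorization p) := by
    intro p
    rw [hm', Nat.factorization_gcd hm0 hk0, Finsupp.inf_apply]
  have hm2' : m ^ 2 ∣ N * m' := by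
    rw [← Nat.factorization_le_iff_dvd (pow_ne_zero 2 hm0) (mul_ne_zero hN0 hm'0)]
    intro p
    rw [Nat.factorization_pow, Nat.factorization_mul hN0 hm'0]
    simp only [Finsupp.smul_apply, Finsupp.add_apply, smul_eq_mul]
    have h1 := hca p; have h2 := hcab p
    rw [hm'fact p]
    omega
  set L : ℕ := N * m' / m ^ 2 with hL
  have hL0 : L ≠ 0 := by
    have : 0 < N * m' := Nat.pos_of_ne_zero (mul_ne_zero hN0 hm'0)
    exact (Nat.div_pos (Nat.le_of_dvd this hm2') (Nat.pos_of_ne_zero (pow_ne_zero 2 hm0))).ne'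
  have hLfact : ∀ p, L.factorization p
      = N.factorization p + min (m.factorization p) (k.factorization p)
        - 2 * m.factorization p := by
    intro p
    rw [hL, Nat.factorization_div hm2', Finsupp.tsub_apply,
      Nat.factorization_mul hN0 hm'0, Nat.factorization_pow]
    simp only [Finsupp.add_apply, Finsupp.smul_apply, smul_eq_mul]
    rw [hm'fact p]
  have hkm'0 : k / m' ≠ 0 := by
    have : m' ∣ k := Nat.gcd_dvd_right m k
    exact (Nat.div_pos (Nat.le_of_dvd hk this) (Nat.pos_of_ne_zero hm'0)).ne'
  have hkm'fact : ∀ p, (k / m').factorization p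
      = k.factorization p - min (m.factorization p) (k.factorization p) := by
    intro p
    rw [Nat.factorization_div (Nat.gcd_dvd_right m k), Finsupp.tsub_apply, hm'fact p]
  set S : Finset ℕ := L.primeFactors.filter (fun p => p ≠ 2 ∧ ¬ p ∣ k / m') with hSdef
  -- characterization of S
  have hS : ∀ p, p ∈ S ↔ p.Prime ∧ k.factorization p ≤ m.factorization p ∧
      2 * m.factorization p < N.factorization p + k.factorization p := by
    intro p
    rw [hSdef, Finset.mem_filter, Nat.mem_primeFactors]
    constructor
    · rintro ⟨⟨hp, hpL, -⟩, -, hpk⟩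
      have h1 := (Nat.Prime.dvd_iff_one_le_factorization hp hL0).mp hpL
      have h2 : (k / m').factorization p = 0 :=
        Nat.factorization_eq_zero_of_not_dvd hpk
      rw [hLfact p] at h1
      rw [hkm'fact p] at h2
      exact ⟨hp, by omega, by omega⟩
    · rintro ⟨hp, h1, h2⟩
      have hp2 : p ≠ 2 := by
        rintro rfl
        have := hca 2
        omega
      refine ⟨⟨hp, ?_, hL0⟩, hp2, ?_⟩
      · rw [Nat.Prime.dvd_iff_one_le_factorization hp hL0, hLfact p]
        omega
      · intro hdvd
        have := (Nat.Prime.dvd_iff_one_le_factorization hp hkm'0).mp hdvd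
        rw [hkm'fact p] at this
        omega
  have hSprime : ∀ p ∈ S, p.Prime := fun p hp => ((hS p).mp hp).1
  -- the map from subsets of S to divisors
  set g : Finset ℕ → ℕ := fun T =>
    m * ∏ p ∈ T, p ^ (N.factorization p + k.factorization p - 2 * m.factorization p)
    with hg
  have hprod0 : ∀ T ⊆ S,
      (∏ p ∈ T, p ^ (N.factorization p + k.factorization p - 2 * m.factorization p)) ≠ 0 := by
    intro T hT
    rw [Finset.prod_ne_zero_iff]
    exact fun p hp => pow_ne_zero _ (hSprime p (hT hp)).ne_zero
  have hg0 : ∀ T ⊆ S, g T ≠ 0 := fun T hT => mul_ne_zero hm0 (hprod0 T hT)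
  have hgfact : ∀ T ⊆ S, ∀ q,
      (g T).factorization q = m.factorization q +
        (if q ∈ T then N.factorization q + k.factorization q - 2 * m.factorization q
         else 0) := by
    intro T hT q
    rw [hg]
    rw [Nat.factorization_mul hm0 (hprod0 T hT)]
    rw [Nat.factorization_prod (fun p hp => pow_ne_zero _ (hSprime p (hT hp)).ne_zero)]
    simp only [Finsupp.add_apply, Finsupp.finset_sum_apply]
    congr 1
    rw [Finset.sum_congr rfl (fun p hp => by
      rw [Nat.Prime.factorization_pow (hSprime p (hT hp)), Finsupp.single_apply])]
    exact Finset.sum_ite_eq' T q _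
  -- the image is exactly the filtered set
  have himg : N.divisors.filter (fun d => Nat.gcd d (N * k / d) = m)
      = (S.powerset).image g := by
    ext d
    rw [Finset.mem_filter, Nat.mem_divisors, Finset.mem_image]
    constructor
    · rintro ⟨⟨hdN, -⟩, hgcd⟩
      have hd0 : d ≠ 0 := (Nat.pos_of_dvd_of_pos hdN hN).ne'
      have hdNk : d ∣ N * k := hdN.trans (Dvd.intro k rfl)
      have hNk0 : N * k ≠ 0 := mul_ne_zero hN0 hk0
      have hq0 : N * k / d ≠ 0 :=
        (Nat.div_pos (Nat.le_of_dvd (Nat.pos_of_ne_zero hNk0) hdNk)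
          (Nat.pos_of_ne_zero hd0)).ne'
      have hcond : ∀ p, min (d.factorization p)
          (N.factorization p + k.factorization p - d.factorization p)
          = m.factorization p := by
        intro p
        have := congrArg (fun n => n.factorization p) hgcd
        rw [Nat.factorization_gcd hd0 hq0, Finsupp.inf_apply,
          Nat.factorization_div hdNk, Finsupp.tsub_apply,
          Nat.factorization_mul hN0 hk0, Finsupp.add_apply] at this
        exact this
      have hea : ∀ p, d.factorization p ≤ N.factorization p :=
        fun p => (Nat.factorization_le_iff_dvd hd0 hN0).mpr hdN p
      refine ⟨S.filter (fun p => m.factorization p < d.factorization p),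
        Finset.mem_powerset.mpr (Finset.filter_subset _ _), ?_⟩
      have hTsub : S.filter (fun p => m.factorization p < d.factorization p) ⊆ S :=
        Finset.filter_subset _ _
      apply Nat.eq_of_factorization_eq (hg0 _ hTsub) hd0
      intro q
      rw [hgfact _ hTsub q]
      by_cases hqT : q ∈ S.filter (fun p => m.factorization p < d.factorization p)
      · have hqS := hTsub hqT
        have hqlt := (Finset.mem_filter.mp hqT).2
        obtain ⟨-, hb, hab⟩ := (hS q).mp hqS
        have h1 := hcond q
        have h2 := hea q
        rw [if_pos hqT]
        omega
      · rw [if_neg hqT]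
        by_cases hqp : q.Prime
        · have hmem : ¬(q ∈ S ∧ m.factorization q < d.factorization q) :=
            fun h => hqT (Finset.mem_filter.mpr h)
          have h1 := hcond q
          have h2 := hea q
          have h3 := hca q
          have h4 := hcab q
          by_cases hqS : k.factorization q ≤ m.factorization q ∧
              2 * m.factorization q < N.factorization q + k.factorization q
          · have : ¬ m.factorization q < d.factorization q :=
              fun hlt => hmem ⟨(hS q).mpr ⟨hqp, hqS.1, hqS.2⟩, hlt⟩
            omega
          · have hqS' : q ∉ S := fun h => by
              obtain ⟨-, hb', hab'⟩ := (hS q).mp h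
              exact hqS ⟨hb', hab'⟩
            omega
        · rw [Nat.factorization_eq_zero_of_not_prime d hqp,
            Nat.factorization_eq_zero_of_not_prime m hqp]
    · rintro ⟨T, hT, rfl⟩
      rw [Finset.mem_powerset] at hT
      have hgT0 := hg0 T hT
      have hdN : g T ∣ N := by
        rw [← Nat.factorization_le_iff_dvd hgT0 hN0]
        intro q
        rw [hgfact T hT q]
        by_cases hqT : q ∈ T
        · obtain ⟨-, hb, hab⟩ := (hS q).mp (hT hqT)
          rw [if_pos hqT]
          have := hca q
          omega
        · rw [if_neg hqT]
          simpa using hca q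
      refine ⟨⟨hdN, hN0⟩, ?_⟩
      have hdNk : g T ∣ N * k := hdN.trans (Dvd.intro k rfl)
      have hNk0 : N * k ≠ 0 := mul_ne_zero hN0 hk0
      have hq0 : N * k / g T ≠ 0 :=
        (Nat.div_pos (Nat.le_of_dvd (Nat.pos_of_ne_zero hNk0) hdNk)
          (Nat.pos_of_ne_zero hgT0)).ne'
      have hgcd0 : Nat.gcd (g T) (N * k / g T) ≠ 0 := Nat.gcd_ne_zero_left hgT0
      apply Nat.eq_of_factorization_eq hgcd0 hm0
      intro q
      rw [Nat.factorization_gcd hgT0 hq0, Finsupp.inf_apply,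
        Nat.factorization_div hdNk, Finsupp.tsub_apply,
        Nat.factorization_mul hN0 hk0, Finsupp.add_apply]
      have hval := hgfact T hT q
      by_cases hqT : q ∈ T
      · obtain ⟨-, hb, hab⟩ := (hS q).mp (hT hqT)
        rw [if_pos hqT] at hval
        rw [hval]
        omega
      · rw [if_neg hqT] at hval
        rw [hval]
        have h1 := hca q; have h2 := hcab q
        omega
  rw [himg]
  rw [Finset.card_image_of_injOn, Finset.card_powerset]
  · rfl
  · intro T1 hT1 T2 hT2 heq
    rw [Finset.mem_coe, Finset.mem_powerset] at hT1 hT2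
    ext q
    by_cases hqS : q ∈ S
    · have h1 := hgfact T1 hT1 q
      have h2 := hgfact T2 hT2 q
      rw [heq] at h1
      rw [h1] at h2
      obtain ⟨-, hb, hab⟩ := (hS q).mp hqS
      by_cases hq1 : q ∈ T1 <;> by_cases hq2 : q ∈ T2 <;>
        simp only [hq1, hq2, if_true, if_false, if_pos, if_neg, not_false_iff] at h2 ⊢ <;>
        first
          | rfl
          | (exfalso; omega)
          | simp [hq1, hq2]
    · constructor
      · intro h; exact absurd (hT1 h) hqS
      · intro h; exact absurd (hT2 h) hqS
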